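/- arXiv:1110.3875 — 5 statements merged into one kernel-verified Lean document; each statement's English description precedes it below -/
import Mathlib

section
/- Let n and d be integers with 0 ≤ d ≤ n and let f : F_2^n → F_2 be a Boolean function such that f(α) = 1 for every α ∈ F_2^n with 0 ≤ wt(α) ≤ d. Then f has no annihilator of algebraic degree less than or equal to d; that is, there is no nonzero Boolean function h : F_2^n → F_2 with deg(h) ≤ d and f(x)h(x) = 0 for all x ∈ F_2^n. -/
open Finset

/-- Hamming weight of a vector in `F_2^n`. -/
def wt {n : ℕ} (α : Fin n → ZMod 2) : ℕ :=
  (Finset.univ.filter fun i => α i = 1).card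

/-- `preceq β α` means `β ⪯ α`, i.e. `β i ≤ α i` coordinatewise. -/
def preceq {n : ℕ} (β α : Fin n → ZMod 2) : Prop :=
  ∀ i, β i = 1 → α i = 1

instance {n : ℕ} (β α : Fin n → ZMod 2) : Decidable (preceq β α) :=
  inferInstanceAs (Decidable (∀ i, β i = 1 → α i = 1))

/-- ANF coefficient of a Boolean function at `α` (Möbius inversion over the Boolean lattice). -/
def anf {n : ℕ} (f : (Fin n → ZMod 2) → ZMod 2) (α : Fin n → ZMod 2) : ZMod 2 :=
  ∑ β ∈ Finset.univ.filter (fun β => preceq β α), f β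

/-- Algebraic degree of a Boolean function: the largest weight of a monomial
with nonzero ANF coefficient. -/
def degB {n : ℕ} (f : (Fin n → ZMod 2) → ZMod 2) : ℕ :=
  (Finset.univ.filter fun α => anf f α ≠ 0).sup wt

/-- Algebraic immunity: minimum degree of a nonzero annihilator of `f` or of `f ⊕ 1`. -/
noncomputable def AI {n : ℕ} (f : (Fin n → ZMod 2) → ZMod 2) : ℕ :=
  sInf {d | ∃ h : (Fin n → ZMod 2) → ZMod 2, h ≠ 0 ∧ degB h = d ∧
    ((∀ x, f x * h x = 0) ∨ (∀ x, (f x + 1) * h x = 0))}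

/-- Elementary symmetric polynomial of degree `i` on `n` variables, as a Boolean function. -/
def esymB (n i : ℕ) (x : Fin n → ZMod 2) : ZMod 2 :=
  ∑ α ∈ Finset.univ.filter (fun α : Fin n → ZMod 2 => wt α = i),
    ∏ j ∈ Finset.univ.filter (fun j => α j = 1), x j

lemma zmod2_cases (a : ZMod 2) : a = 0 ∨ a = 1 := by revert a; decide

lemma preceq_antisymm {n : ℕ} {β α : Fin n → ZMod 2} (h1 : preceq β α) (h2 : preceq α β) :
    β = α := by
  funext i
  rcases zmod2_cases (β i) with hb | hb <;> rcases zmod2_cases (α i) with ha | ha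
  · rw [hb, ha]
  · exact absurd (h2 i ha) (by rw [hb]; decide)
  · exact absurd (h1 i hb) (by rw [ha]; decide)
  · rw [hb, ha]

lemma sum_const_even {n : ℕ} {γ α : Fin n → ZMod 2} (hga : preceq γ α) (hne : γ ≠ α)
    (c : ZMod 2) :
    ∑ β ∈ Finset.univ.filter (fun β => preceq γ β ∧ preceq β α), c = 0 := by
  have hi : ∃ i, γ i = 0 ∧ α i = 1 := by
    by_contra hc
    push_neg at hc
    apply hne
    funext i
    rcases zmod2_cases (γ i) with hg | hg
    · rcases zmod2_cases (α i) with ha | ha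
      · rw [hg, ha]
      · exact absurd ha (hc i hg)
    · rw [hg, hga i hg]
  obtain ⟨i, hgi, hai⟩ := hi
  have g_mem : ∀ β ∈ Finset.univ.filter (fun β => preceq γ β ∧ preceq β α),
      Function.update β i (β i + 1) ∈
        Finset.univ.filter (fun β => preceq γ β ∧ preceq β α) := by
    intro β hβ
    simp only [Finset.mem_filter, Finset.mem_univ, true_and] at hβ ⊢
    obtain ⟨h1, h2⟩ := hβ
    constructor
    · intro j hj
      by_cases hji : j = i
      · subst hji; rw [hj] at hgi; exact absurd hgi (by decide)
      · rw [Function.update_of_ne hji]; exact h1 j hj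
    · intro j hj
      by_cases hji : j = i
      · subst hji; exact hai
      · rw [Function.update_of_ne hji] at hj; exact h2 j hj
  apply Finset.sum_involution (fun β _ => Function.update β i (β i + 1))
  · intro a _
    rcases zmod2_cases c with h | h <;> rw [h] <;> decide
  · intro β _ _
    intro hcon
    have := congrFun hcon i
    rw [Function.update_self] at this
    exact absurd this (by rcases zmod2_cases (β i) with h | h <;> rw [h] <;> decide)
  · intro β _
    funext j
    by_cases hji : j = i
    · subst hji
      rw [Function.update_self, Function.update_self]
      rcases zmod2_cases (β j) with h | h <;> rw [h] <;> decide
    · rw [Function.update_of_ne hji, Function.update_of_ne hji]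
  · exact g_mem

lemma anf_inv {n : ℕ} (f : (Fin n → ZMod 2) → ZMod 2) (α : Fin n → ZMod 2) :
    ∑ β ∈ Finset.univ.filter (fun β => preceq β α), anf f β = f α := by
  unfold anf
  rw [Finset.sum_comm' (s' := fun γ => Finset.univ.filter (fun β => preceq γ β ∧ preceq β α))
    (t' := Finset.univ)]
  · rw [Finset.sum_eq_single α]
    · have : Finset.univ.filter (fun β => preceq α β ∧ preceq β α) = {α} := by
        ext β
        simp only [Finset.mem_filter, Finset.mem_univ, true_and, Finset.mem_singleton]
        constructor
        · rintro ⟨h1, h2⟩; exact preceq_antisymm h2 h1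
        · rintro rfl; exact ⟨fun i h => h, fun i h => h⟩
      rw [this, Finset.sum_singleton]
    · intro γ _ hγ
      by_cases hga : preceq γ α
      · exact sum_const_even hga hγ (f γ)
      · have : Finset.univ.filter (fun β => preceq γ β ∧ preceq β α) = ∅ := by
          ext β
          simp only [Finset.mem_filter, Finset.mem_univ, true_and, Finset.notMem_empty,
            iff_false]
          rintro ⟨h1, h2⟩
          exact hga (fun i h => h2 i (h1 i h))
        rw [this, Finset.sum_empty]
    · intro h; exact absurd (Finset.mem_univ α) h
  · intro β γ
    simp only [Finset.mem_filter, Finset.mem_univ, true_and, and_true]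
    tauto

lemma wt_lt_of_preceq_ne {n : ℕ} {β α : Fin n → ZMod 2} (h : preceq β α) (hne : β ≠ α) :
    wt β < wt α := by
  apply Finset.card_lt_card
  constructor
  · intro i hi
    simp only [Finset.mem_filter, Finset.mem_univ, true_and] at hi ⊢
    exact h i hi
  · intro hsub
    apply hne
    funext i
    rcases zmod2_cases (β i) with hb | hb <;> rcases zmod2_cases (α i) with ha | ha
    · rw [hb, ha]
    · have : α i = 1 → β i = 1 := by
        intro h'
        have := hsub (Finset.mem_filter.mpr ⟨Finset.mem_univ i, h'⟩)
        exact (Finset.mem_filter.mp this).2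
      rw [hb, ha]; exact absurd (this ha) (by rw [hb]; decide)
    · rw [hb, h i hb]
    · rw [hb, ha]

theorem stmt_1 {n : ℕ} (d : ℕ) (hdn : d ≤ n)
    (f : (Fin n → ZMod 2) → ZMod 2)
    (hf : ∀ α : Fin n → ZMod 2, wt α ≤ d → f α = 1) :
    ¬ ∃ h : (Fin n → ZMod 2) → ZMod 2,
        h ≠ 0 ∧ degB h ≤ d ∧ ∀ x, f x * h x = 0 := by
  rintro ⟨h, hne, hdeg, hann⟩
  have hS : (Finset.univ.filter fun α => anf h α ≠ 0).Nonempty := by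
    by_contra hc
    rw [Finset.not_nonempty_iff_eq_empty] at hc
    apply hne
    funext x
    have := anf_inv h x
    have hz : ∀ β ∈ Finset.univ.filter (fun β => preceq β x), anf h β = 0 := by
      intro β _
      by_contra hβ
      have : β ∈ Finset.univ.filter fun α => anf h α ≠ 0 :=
        Finset.mem_filter.mpr ⟨Finset.mem_univ β, hβ⟩
      rw [hc] at this
      exact absurd this (Finset.notMem_empty β)
    rw [Finset.sum_eq_zero hz] at this
    exact this.symm
  obtain ⟨α, hαmem, hαmin⟩ := Finset.exists_min_image _ wt hS
  have hαanf : anf h α ≠ 0 := (Finset.mem_filter.mp hαmem).2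
  have hwt : wt α ≤ d := le_trans (Finset.le_sup hαmem) hdeg
  have hval : h α = anf h α := by
    rw [← anf_inv h α]
    apply Finset.sum_eq_single α
    · intro β hβ hβne
      by_contra hβanf
      have hβmem : β ∈ Finset.univ.filter fun γ => anf h γ ≠ 0 :=
        Finset.mem_filter.mpr ⟨Finset.mem_univ β, hβanf⟩
      have := hαmin β hβmem
      have hlt := wt_lt_of_preceq_ne (Finset.mem_filter.mp hβ).2 hβne
      omega
    · intro hα
      exact absurd (Finset.mem_filter.mpr ⟨Finset.mem_univ α, fun i hi => hi⟩) hα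
  have h1 : h α = 1 := by
    rw [hval]
    rcases zmod2_cases (anf h α) with h' | h'
    · exact absurd h' hαanf
    · exact h'
  have := hann α
  rw [hf α hwt, h1, mul_one] at this
  exact absurd this (by decide)
end

section
/- Let q ≥ 0 and let N, M be nonnegative integers with N ≡ 2^q (mod 2^{q+1}) and M ≡ 2^{q+1} − 1 (mod 2^{q+1}). Then the sum of binomial coefficients ∑_{i=0}^{M} C(N, i) is even. -/
open Finset

lemma lucas_step (m j : ℕ) : ((m.choose j : ℕ) : ZMod 2) =
    ((m % 2).choose (j % 2) : ℕ) * ((m / 2).choose (j / 2) : ℕ) := by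
  have := @Choose.choose_modEq_choose_mod_mul_choose_div_nat m j 2 ⟨Nat.prime_two⟩
  have h := (ZMod.natCast_eq_natCast_iff _ _ _).mpr this
  rw [h, Nat.cast_mul]

/-- Base-`2^a` Lucas in `ZMod 2`. -/
lemma lucas_pow (a : ℕ) : ∀ n k : ℕ, ((n.choose k : ℕ) : ZMod 2) =
    ((n / 2 ^ a).choose (k / 2 ^ a) : ℕ) * ((n % 2 ^ a).choose (k % 2 ^ a) : ℕ) := by
  induction a with
  | zero => intro n k; simp [Nat.mod_one]
  | succ a ih =>
    intro n k
    have hdiv : ∀ x : ℕ, x / 2 ^ (a + 1) = x / 2 / 2 ^ a := by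
      intro x; rw [Nat.div_div_eq_div_mul, pow_succ']
    have hmod2 : ∀ x : ℕ, x % 2 ^ (a + 1) % 2 = x % 2 := by
      intro x; exact Nat.mod_mod_of_dvd x ⟨2 ^ a, by rw [pow_succ']⟩
    have hmoddiv : ∀ x : ℕ, x % 2 ^ (a + 1) / 2 = x / 2 % 2 ^ a := by
      intro x; rw [pow_succ']; exact Nat.mod_mul_right_div_self x 2 (2 ^ a)
    rw [lucas_step n k, ih (n / 2) (k / 2), lucas_step (n % 2 ^ (a + 1)) (k % 2 ^ (a + 1))]
    rw [hdiv n, hdiv k, hmod2 n, hmod2 k, hmoddiv n, hmoddiv k]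
    ring

lemma sum_blocks (f : ℕ → ZMod 2) (P : ℕ) : ∀ K,
    ∑ i ∈ range (K * P), f i = ∑ b ∈ range K, ∑ r ∈ range P, f (b * P + r) := by
  intro K
  induction K with
  | zero => simp
  | succ K ih => rw [Nat.succ_mul, Finset.sum_range_add, ih, Finset.sum_range_succ]

theorem stmt_8 (q N M : ℕ)
    (hN : N % 2 ^ (q + 1) = 2 ^ q)
    (hM : M % 2 ^ (q + 1) = 2 ^ (q + 1) - 1) :
    Even (∑ i ∈ Finset.range (M + 1), N.choose i) := by
  set P := 2 ^ (q + 1) with hP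
  have hPpos : 0 < P := pow_pos (by norm_num) _
  have h0 : P * (M / P) + (P - 1) = M := by rw [← hM]; exact Nat.div_add_mod M P
  have hM1 : M + 1 = (M / P + 1) * P := by
    rw [add_mul, one_mul, mul_comm]
    omega
  have key : ((∑ i ∈ Finset.range (M + 1), N.choose i : ℕ) : ZMod 2) = 0 := by
    push_cast
    rw [hM1, sum_blocks]
    have hterm : ∀ b r : ℕ, r < P → ((N.choose (b * P + r) : ℕ) : ZMod 2) =
        ((N / P).choose b : ℕ) * (((2 ^ q).choose r : ℕ) : ZMod 2) := by
      intro b r hr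
      rw [lucas_pow (q + 1) N (b * P + r), ← hP, hN]
      congr 2
      · rw [mul_comm, Nat.mul_add_div hPpos, Nat.div_eq_of_lt hr, add_zero]
      · rw [add_comm, Nat.add_mul_mod_self_right, Nat.mod_eq_of_lt hr]
    have hsum : ∑ r ∈ range P, (((2 ^ q).choose r : ℕ) : ZMod 2) = 0 := by
      have hle : 2 ^ q + 1 ≤ P := by
        rw [hP, pow_succ]
        have := pow_pos (show 0 < 2 by norm_num) q
        omega
      have hnat : ∑ r ∈ range P, ((2 ^ q).choose r) = 2 ^ (2 ^ q) := by
        rw [← Nat.sum_range_choose (2 ^ q)]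
        symm
        refine Finset.sum_subset (Finset.range_subset_range.mpr hle) ?_
        intro x hx hnx
        simp only [Finset.mem_range] at hx hnx
        exact Nat.choose_eq_zero_of_lt (by omega)
      rw [← Nat.cast_sum, hnat, Nat.cast_pow,
        show ((2 : ℕ) : ZMod 2) = 0 by decide,
        zero_pow (pow_pos (show 0 < 2 by norm_num) q).ne']
    refine Finset.sum_eq_zero fun b _ => ?_
    rw [Finset.sum_congr rfl (fun r hr => hterm b r (Finset.mem_range.mp hr)),
      ← Finset.mul_sum, hsum, mul_zero]
  exact even_iff_two_dvd.mpr ((ZMod.natCast_eq_zero_iff _ 2).mp key)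
end

section
/- Let n and d be integers with 1 ≤ d ≤ n, and let c : F_2^n → F_2 satisfy c_β = 0 for every β with wt(β) ≥ d. Define s : F_2^n → F_2 by s_α = ⊕_{β ⪯ α} c_β. Then for every α ∈ F_2^n, s_α = ⊕_{γ ⪯ α, 0 ≤ wt(γ) ≤ d−1} ( ∑_{i=0}^{d−1−wt(γ)} C(wt(α)−wt(γ), i) mod 2 ) · s_γ, where the inner sum of binomial coefficients is reduced modulo 2. -/
open Finset

lemma diag_sum (N j : ℕ) :
    ∑ k ∈ Finset.range (j+1), N.choose k * (N-k).choose (j-k) = N.choose j * 2 ^ j := by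
  rw [← Nat.sum_range_choose, Finset.mul_sum]
  apply Finset.sum_congr rfl
  intro k hk
  have hk' : k ≤ j := Nat.lt_succ_iff.mp (Finset.mem_range.mp hk)
  by_cases hj : j ≤ N
  · rw [← Nat.choose_mul (n := N) hk']
  · have hNj : N.choose j = 0 := Nat.choose_eq_zero_of_lt (by omega)
    rw [hNj, Nat.zero_mul]
    by_cases hkN : k ≤ N
    · have h5 : (N-k).choose (j-k) = 0 := Nat.choose_eq_zero_of_lt (by omega)
      rw [h5, Nat.mul_zero]
    · have h5 : N.choose k = 0 := Nat.choose_eq_zero_of_lt (by omega)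
      rw [h5, Nat.zero_mul]

lemma key_nat (N m : ℕ) :
    ∑ k ∈ Finset.range (m+1), N.choose k * ∑ i ∈ Finset.range (m - k + 1), (N-k).choose i
      = ∑ j ∈ Finset.range (m+1), N.choose j * 2 ^ j := by
  induction m with
  | zero => simp
  | succ m ih =>
    have h1 : ∑ k ∈ Finset.range (m+2), N.choose k * ∑ i ∈ Finset.range (m + 1 - k + 1), (N-k).choose i
        = (∑ k ∈ Finset.range (m+1), N.choose k * ∑ i ∈ Finset.range (m - k + 1), (N-k).choose i)
          + ∑ k ∈ Finset.range (m+2), N.choose k * (N-k).choose (m+1-k) := by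
      rw [Finset.sum_range_succ, Finset.sum_range_succ (f := fun k => N.choose k * (N-k).choose (m+1-k))]
      have h2 : ∀ k ∈ Finset.range (m+1),
          N.choose k * ∑ i ∈ Finset.range (m + 1 - k + 1), (N-k).choose i
          = N.choose k * ∑ i ∈ Finset.range (m - k + 1), (N-k).choose i
            + N.choose k * (N-k).choose (m+1-k) := by
        intro k hk
        have hk' : k ≤ m := Nat.lt_succ_iff.mp (Finset.mem_range.mp hk)
        have h3 : m + 1 - k + 1 = (m - k + 1) + 1 := by omega
        have h4 : m - k + 1 = m + 1 - k := by omega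
        rw [h3, Finset.sum_range_succ, Nat.mul_add, h4]
      rw [Finset.sum_congr rfl h2, Finset.sum_add_distrib]
      simp [Nat.sub_self]
      ring
    rw [h1, ih, diag_sum N (m+1)]
    exact (Finset.sum_range_succ _ (m+1)).symm

lemma key_zmod (N m : ℕ) :
    ((∑ k ∈ Finset.range (N+1), N.choose k *
        (if k ≤ m then ∑ i ∈ Finset.range (m - k + 1), (N-k).choose i else 0) : ℕ) : ZMod 2) = 1 := by
  have hN : Finset.range (N+1) ⊆ Finset.range (N+m+2) := Finset.range_subset_range.2 (by omega)
  have hm : Finset.range (m+1) ⊆ Finset.range (N+m+2) := Finset.range_subset_range.2 (by omega)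
  have e1 : ∑ k ∈ Finset.range (N+1), N.choose k *
        (if k ≤ m then ∑ i ∈ Finset.range (m - k + 1), (N-k).choose i else 0)
      = ∑ k ∈ Finset.range (N+m+2), N.choose k *
        (if k ≤ m then ∑ i ∈ Finset.range (m - k + 1), (N-k).choose i else 0) := by
    apply Finset.sum_subset hN
    intro k _ hk
    rw [Nat.choose_eq_zero_of_lt (by simp at hk ⊢; omega), Nat.zero_mul]
  have e2 : ∑ k ∈ Finset.range (m+1), N.choose k *
        (if k ≤ m then ∑ i ∈ Finset.range (m - k + 1), (N-k).choose i else 0)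
      = ∑ k ∈ Finset.range (N+m+2), N.choose k *
        (if k ≤ m then ∑ i ∈ Finset.range (m - k + 1), (N-k).choose i else 0) := by
    apply Finset.sum_subset hm
    intro k _ hk
    rw [if_neg (by simp at hk ⊢; omega), Nat.mul_zero]
  have e3 : ∑ k ∈ Finset.range (m+1), N.choose k *
        (if k ≤ m then ∑ i ∈ Finset.range (m - k + 1), (N-k).choose i else 0)
      = ∑ k ∈ Finset.range (m+1), N.choose k * ∑ i ∈ Finset.range (m - k + 1), (N-k).choose i := by
    apply Finset.sum_congr rfl
    intro k hk
    rw [if_pos (Nat.lt_succ_iff.mp (Finset.mem_range.mp hk))]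
  rw [e1, ← e2, e3, key_nat]
  rw [Finset.sum_range_succ' (fun j => N.choose j * 2 ^ j) m]
  push_cast
  simp [show (2:ZMod 2) = 0 from rfl]


lemma zmod2_ne_one {x : ZMod 2} (h : ¬ x = 1) : x = 0 := by
  revert h; revert x; decide

lemma wt_mono {n : ℕ} {β α : Fin n → ZMod 2} (h : preceq β α) : wt β ≤ wt α := by
  apply Finset.card_le_card
  intro i hi
  simp only [Finset.mem_filter, Finset.mem_univ, true_and] at hi ⊢
  exact h i hi

lemma interval_sum {n : ℕ} (α β : Fin n → ZMod 2) (hβα : preceq β α) (F : ℕ → ZMod 2) :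
    ∑ γ ∈ Finset.univ.filter (fun γ => preceq β γ ∧ preceq γ α), F (wt γ)
      = ∑ k ∈ Finset.range ((wt α - wt β) + 1), ((wt α - wt β).choose k) • F (wt β + k) := by
  classical
  set D : Finset (Fin n) := Finset.univ.filter (fun i => α i = 1 ∧ ¬ β i = 1) with hD
  have hsub : (Finset.univ.filter fun i => β i = 1) ⊆ (Finset.univ.filter fun i => α i = 1) := by
    intro i hi
    simp only [Finset.mem_filter, Finset.mem_univ, true_and] at hi ⊢
    exact hβα i hi
  have hDcard : D.card = wt α - wt β := by
    have hDeq : D = (Finset.univ.filter fun i => α i = 1) \ (Finset.univ.filter fun i => β i = 1) := by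
      ext i
      simp [hD, Finset.mem_sdiff, and_comm]
    rw [hDeq, Finset.card_sdiff_of_subset hsub]
    rfl
  have key : ∑ γ ∈ Finset.univ.filter (fun γ => preceq β γ ∧ preceq γ α), F (wt γ)
      = ∑ T ∈ D.powerset, F (wt β + T.card) := by
    apply Finset.sum_nbij' (i := fun γ => Finset.univ.filter (fun i => γ i = 1 ∧ ¬ β i = 1))
      (j := fun T => fun i => if i ∈ T then 1 else β i)
    · -- hi
      intro γ hγ
      simp only [Finset.mem_filter, Finset.mem_univ, true_and] at hγ
      rw [Finset.mem_powerset]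
      intro i hi
      simp only [Finset.mem_filter, Finset.mem_univ, true_and, hD] at hi ⊢
      exact ⟨hγ.2 i hi.1, hi.2⟩
    · -- hj
      intro T hT
      rw [Finset.mem_powerset] at hT
      simp only [Finset.mem_filter, Finset.mem_univ, true_and]
      constructor
      · intro i hi
        by_cases h : i ∈ T
        · simp [h]
        · simp [h, hi]
      · intro i hi
        by_cases h : i ∈ T
        · have := hT h
          simp only [Finset.mem_filter, Finset.mem_univ, true_and, hD] at this
          exact this.1
        · simp only [if_neg h] at hi
          exact hβα i hi
    · -- left_inv
      intro γ hγ
      simp only [Finset.mem_filter, Finset.mem_univ, true_and] at hγ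
      funext i
      by_cases h : i ∈ Finset.univ.filter (fun i => γ i = 1 ∧ ¬ β i = 1)
      · simp only [Finset.mem_filter, Finset.mem_univ, true_and] at h
        rw [if_pos (by simp [h.1, h.2]), h.1]
      · simp only [Finset.mem_filter, Finset.mem_univ, true_and, not_and, not_not] at h
        rw [if_neg (by simp only [Finset.mem_filter, Finset.mem_univ, true_and, not_and, not_not]; exact h)]
        by_cases hb : β i = 1
        · rw [hb, hγ.1 i hb]
        · rw [zmod2_ne_one hb]
          by_cases hg : γ i = 1
          · exact absurd (h hg) hb
          · rw [zmod2_ne_one hg]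
    · -- right_inv
      intro T hT
      rw [Finset.mem_powerset] at hT
      ext i
      simp only [Finset.mem_filter, Finset.mem_univ, true_and]
      constructor
      · rintro ⟨h1, h2⟩
        by_cases h : i ∈ T
        · exact h
        · rw [if_neg h] at h1; exact absurd h1 h2
      · intro h
        have hiD := hT h
        simp only [Finset.mem_filter, Finset.mem_univ, true_and, hD] at hiD
        exact ⟨by rw [if_pos h], hiD.2⟩
    · -- h
      intro γ hγ
      simp only [Finset.mem_filter, Finset.mem_univ, true_and] at hγ
      congr 1
      have : (Finset.univ.filter fun i => γ i = 1)
          = (Finset.univ.filter fun i => β i = 1) ∪ (Finset.univ.filter fun i => γ i = 1 ∧ ¬ β i = 1) := by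
        ext i
        simp only [Finset.mem_filter, Finset.mem_union, Finset.mem_univ, true_and]
        constructor
        · intro h
          by_cases hb : β i = 1
          · exact Or.inl hb
          · exact Or.inr ⟨h, hb⟩
        · rintro (h | h)
          · exact hγ.1 i h
          · exact h.1
      rw [wt, this, Finset.card_union_of_disjoint]
      · rfl
      · rw [Finset.disjoint_left]
        intro i hi hi2
        simp only [Finset.mem_filter, Finset.mem_univ, true_and] at hi hi2
        exact hi2.2 hi
  rw [key, Finset.sum_powerset_apply_card (fun j => F (wt β + j)), hDcard]
lemma coeff_one {n : ℕ} (d : ℕ) (α β : Fin n → ZMod 2) (hβα : preceq β α) (hwβ : wt β ≤ d - 1) :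
    ∑ γ ∈ Finset.univ.filter (fun γ => preceq β γ ∧ preceq γ α),
      (if wt γ ≤ d - 1 then ((∑ i ∈ Finset.range (d - 1 - wt γ + 1), Nat.choose (wt α - wt γ) i : ℕ) : ZMod 2) else 0) = 1 := by
  have hfun := interval_sum α β hβα
    (fun w => if w ≤ d - 1 then ((∑ i ∈ Finset.range (d - 1 - w + 1), Nat.choose (wt α - w) i : ℕ) : ZMod 2) else 0)
  rw [hfun]
  have hkey := key_zmod (wt α - wt β) (d - 1 - wt β)
  push_cast at hkey
  rw [← hkey]
  apply Finset.sum_congr rfl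
  intro k hk
  rw [nsmul_eq_mul]
  congr 1
  by_cases h : wt β + k ≤ d - 1
  · rw [if_pos h, if_pos (by omega)]
    have e1 : d - 1 - (wt β + k) = d - 1 - wt β - k := by omega
    have e2 : wt α - (wt β + k) = wt α - wt β - k := by omega
    rw [e1, e2]
    push_cast
    rfl
  · rw [if_neg h, if_neg (by omega)]

theorem stmt_9 {n : ℕ} (d : ℕ) (hd1 : 1 ≤ d) (hdn : d ≤ n)
    (c s : (Fin n → ZMod 2) → ZMod 2)
    (hc : ∀ β : Fin n → ZMod 2, d ≤ wt β → c β = 0)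
    (hs : ∀ α : Fin n → ZMod 2, s α = ∑ β ∈ Finset.univ.filter (fun β => preceq β α), c β) :
    ∀ α : Fin n → ZMod 2,
      s α = ∑ γ ∈ Finset.univ.filter (fun γ => preceq γ α ∧ wt γ ≤ d - 1),
        (((∑ i ∈ Finset.range (d - 1 - wt γ + 1), Nat.choose (wt α - wt γ) i : ℕ) : ZMod 2)) * s γ := by
  intro α
  set T : (Fin n → ZMod 2) → ZMod 2 :=
    fun γ => ((∑ i ∈ Finset.range (d - 1 - wt γ + 1), Nat.choose (wt α - wt γ) i : ℕ) : ZMod 2) with hT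
  symm
  calc
    ∑ γ ∈ Finset.univ.filter (fun γ => preceq γ α ∧ wt γ ≤ d - 1), T γ * s γ
        = ∑ γ ∈ Finset.univ.filter (fun γ => preceq γ α ∧ wt γ ≤ d - 1),
            ∑ β ∈ Finset.univ.filter (fun β => preceq β γ), T γ * c β := by
          apply Finset.sum_congr rfl
          intro γ _
          rw [hs γ, Finset.mul_sum]
    _ = ∑ γ : Fin n → ZMod 2, ∑ β : Fin n → ZMod 2,
          if (preceq γ α ∧ wt γ ≤ d - 1) ∧ preceq β γ then T γ * c β else 0 := by
          rw [Finset.sum_filter]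
          apply Finset.sum_congr rfl
          intro γ _
          rw [Finset.sum_filter]
          by_cases h : preceq γ α ∧ wt γ ≤ d - 1
          · rw [if_pos h]
            apply Finset.sum_congr rfl
            intro β _
            by_cases hq : preceq β γ
            · rw [if_pos hq, if_pos ⟨h, hq⟩]
            · rw [if_neg hq, if_neg (by tauto)]
          · rw [if_neg h]
            symm
            apply Finset.sum_eq_zero
            intro β _
            rw [if_neg (by tauto)]
    _ = ∑ β : Fin n → ZMod 2,
          (∑ γ : Fin n → ZMod 2,
            if (preceq γ α ∧ wt γ ≤ d - 1) ∧ preceq β γ then T γ else 0) * c β := by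
          rw [Finset.sum_comm]
          apply Finset.sum_congr rfl
          intro β _
          rw [Finset.sum_mul]
          apply Finset.sum_congr rfl
          intro γ _
          split_ifs with h
          · rfl
          · rw [zero_mul]
    _ = ∑ β : Fin n → ZMod 2, (if preceq β α then (1 : ZMod 2) else 0) * c β := by
          apply Finset.sum_congr rfl
          intro β _
          by_cases hβ : preceq β α
          · rw [if_pos hβ]
            by_cases hw : wt β ≤ d - 1
            · congr 1
              have hco := coeff_one d α β ?_ hw
              · rw [← hco, Finset.sum_filter]
                apply Finset.sum_congr rfl
                intro γ _
                by_cases h1 : preceq β γ ∧ preceq γ α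
                · rw [if_pos h1]
                  by_cases h2 : wt γ ≤ d - 1
                  · rw [if_pos h2, if_pos ⟨⟨h1.2, h2⟩, h1.1⟩]
                  · rw [if_neg h2, if_neg (by tauto)]
                · rw [if_neg h1, if_neg (by tauto)]
              · exact hβ
            · have hcβ : c β = 0 := hc β (by omega)
              rw [hcβ, mul_zero, mul_zero]
          · rw [if_neg hβ, zero_mul]
            apply mul_eq_zero_of_left
            apply Finset.sum_eq_zero
            intro γ _
            rw [if_neg]
            rintro ⟨⟨h1, _⟩, h2⟩
            exact hβ (fun i hi => h1 i (h2 i hi))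
    _ = s α := by
          rw [hs α, Finset.sum_filter]
          apply Finset.sum_congr rfl
          intro β _
          split_ifs with h
          · rw [one_mul]
          · rw [zero_mul]
end

section
/- Let k and d be positive integers with 2 ≤ d ≤ k such that d is a suffix of k in binary, and let t be an integer with 0 ≤ t ≤ ⌊log₂ d⌋. Then there exists an integer i with 0 ≤ i ≤ d−1 and i − k ≡ 2^t (mod 2^{t+1}). -/
open Finset

theorem stmt_10 (k d t : ℕ) (hd2 : 2 ≤ d) (hdk : d ≤ k)
    (hsuf : k % 2 ^ (Nat.log 2 d + 1) = d)
    (ht : t ≤ Nat.log 2 d) :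
    ∃ i : ℕ, i ≤ d - 1 ∧ (i : ℤ) - (k : ℤ) ≡ 2 ^ t [ZMOD (2 ^ (t + 1))] := by
  set L := Nat.log 2 d with hL
  have hm0 : 0 < 2 ^ (t + 1) := Nat.pow_pos (by norm_num)
  refine ⟨(d + 2 ^ t) % 2 ^ (t + 1), ?_, ?_⟩
  · have hlt : (d + 2 ^ t) % 2 ^ (t + 1) < 2 ^ (t + 1) := Nat.mod_lt _ hm0
    rcases lt_or_eq_of_le ht with htL | htL
    · have h1 : 2 ^ (t + 1) ≤ 2 ^ L := Nat.pow_le_pow_right (by norm_num) (by omega)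
      have h2 : 2 ^ L ≤ d := Nat.pow_log_le_self 2 (by omega)
      omega
    · have h2 : 2 ^ t ≤ d := by rw [htL]; exact Nat.pow_log_le_self 2 (by omega)
      have h3 : d < 2 ^ (t + 1) := by rw [htL]; exact Nat.lt_pow_succ_log_self (by norm_num) d
      have he : (2:ℕ) ^ (t + 1) = 2 * 2 ^ t := by ring
      have hge : 2 ^ (t + 1) ≤ d + 2 ^ t := by omega
      have h4 : (d + 2 ^ t) % 2 ^ (t + 1) = (d + 2 ^ t - 2 ^ (t + 1)) % 2 ^ (t + 1) :=
        Nat.mod_eq_sub_mod hge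
      have h5 : (d + 2 ^ t - 2 ^ (t + 1)) % 2 ^ (t + 1) = d + 2 ^ t - 2 ^ (t + 1) :=
        Nat.mod_eq_of_lt (by omega)
      omega
  · set i := (d + 2 ^ t) % 2 ^ (t + 1) with hi
    obtain ⟨s, hs⟩ : ∃ s, i + 2 ^ (t + 1) * s = d + 2 ^ t := ⟨_, Nat.mod_add_div _ _⟩
    obtain ⟨q, hq⟩ : ∃ q, d + 2 ^ (L + 1) * q = k :=
      ⟨k / 2 ^ (L + 1), by rw [← hsuf]; exact Nat.mod_add_div _ _⟩
    obtain ⟨c, hc⟩ : (2 ^ (t + 1) : ℕ) ∣ 2 ^ (L + 1) := pow_dvd_pow 2 (by omega)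
    have hs' : (i : ℤ) + 2 ^ (t + 1) * s = d + 2 ^ t := by exact_mod_cast hs
    have hq' : (d : ℤ) + 2 ^ (L + 1) * q = k := by exact_mod_cast hq
    have hc' : (2 : ℤ) ^ (L + 1) = 2 ^ (t + 1) * c := by exact_mod_cast hc
    rw [Int.modEq_iff_dvd]
    exact ⟨s + c * q, by linear_combination -hs' - hq' + (q : ℤ) * hc'⟩
end

section
/- Let k and d be positive integers with 1 ≤ d ≤ k such that d is a suffix of k in binary, and set n = 2k. Then for every integer x with x ∈ [0, d−1] ∪ [n−d+1, n], there exists an integer t with 0 ≤ t ≤ ⌊log₂ d⌋ such that x − k ≡ 2^t (mod 2^{t+1}); equivalently, the 2-adic valuation of x − k is at most ⌊log₂ d⌋. -/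
open Finset

theorem stmt_11 (k d : ℕ) (hd1 : 1 ≤ d) (hdk : d ≤ k)
    (hsuf : k % 2 ^ (Nat.log 2 d + 1) = d) :
    ∀ x : ℕ, (x ≤ d - 1 ∨ (2 * k - d + 1 ≤ x ∧ x ≤ 2 * k)) →
      ∃ t : ℕ, t ≤ Nat.log 2 d ∧ (x : ℤ) - (k : ℤ) ≡ 2 ^ t [ZMOD (2 ^ (t + 1))] := by
  intro x hx
  set L := Nat.log 2 d with hL
  have hdM : d < 2 ^ (L + 1) := Nat.lt_pow_succ_log_self (by norm_num) d
  have hkd : (2 : ℤ) ^ (L + 1) ∣ (k : ℤ) - d := by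
    have h2 : (k : ℤ) % (2 : ℤ) ^ (L + 1) = d := by exact_mod_cast hsuf
    exact Int.dvd_self_sub_of_emod_eq h2
  have hMdvd : ¬ ((2 : ℤ) ^ (L + 1) ∣ (x : ℤ) - k) := by
    intro hdv
    have hcast : (d : ℤ) < 2 ^ (L + 1) := by exact_mod_cast hdM
    rcases hx with h | ⟨h2, h3⟩
    · -- residue is d - x ∈ [1, d]
      have hxd : (x : ℤ) ≤ (d : ℤ) - 1 := by
        have : x ≤ d - 1 := h; omega
      have hdvd2 : (2 : ℤ) ^ (L + 1) ∣ (d : ℤ) - x := by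
        have h4 : (2 : ℤ) ^ (L + 1) ∣ (x : ℤ) - d := by
          have h5 := dvd_add hdv hkd
          have h6 : ((x : ℤ) - k) + ((k : ℤ) - d) = (x : ℤ) - d := by ring
          rwa [h6] at h5
        rw [show (d : ℤ) - x = -((x : ℤ) - d) by ring]
        exact dvd_neg.mpr h4
      have := Int.le_of_dvd (by omega) hdvd2
      have : (2 : ℤ) ^ (L + 1) ≤ (d : ℤ) - x := this
      omega
    · -- residue is x - 2k + d ∈ [1, d]
      have h2' : 2 * (k : ℤ) - d + 1 ≤ x := by
        have hd2k : d ≤ 2 * k := by omega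
        omega
      have h3' : (x : ℤ) ≤ 2 * k := by exact_mod_cast h3
      have hdvd2 : (2 : ℤ) ^ (L + 1) ∣ (x : ℤ) - 2 * k + d := by
        have h4 := dvd_sub hdv hkd
        have : ((x : ℤ) - k) - ((k : ℤ) - d) = (x : ℤ) - 2 * k + d := by ring
        rwa [this] at h4
      have := Int.le_of_dvd (by omega) hdvd2
      omega
  have hne : (x : ℤ) - k ≠ 0 := fun h => hMdvd (h ▸ dvd_zero _)
  set m := ((x : ℤ) - k).natAbs with hm
  have hmne : m ≠ 0 := Int.natAbs_ne_zero.mpr hne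
  set t := padicValNat 2 m with ht
  have hdvd : 2 ^ t ∣ m := pow_padicValNat_dvd
  have hndvd : ¬ 2 ^ (t + 1) ∣ m := pow_succ_padicValNat_not_dvd hmne
  have htL : t ≤ L := by
    by_contra hlt
    push_neg at hlt
    have h1 : 2 ^ (L + 1) ∣ (2 : ℕ) ^ t := pow_dvd_pow 2 (by omega)
    have h2 : (2 : ℕ) ^ (L + 1) ∣ m := h1.trans hdvd
    have h3 : (2 : ℤ) ^ (L + 1) ∣ (x : ℤ) - k := by
      have h4 : ((2:ℤ)) ^ (L + 1) ∣ (m : ℤ) := by exact_mod_cast Int.natCast_dvd_natCast.mpr h2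
      exact Int.dvd_natAbs.mp h4
    exact hMdvd h3
  refine ⟨t, htL, ?_⟩
  obtain ⟨u, hu⟩ := hdvd
  have hu_odd : u % 2 = 1 := by
    rcases Nat.mod_two_eq_zero_or_one u with h | h
    · exfalso
      obtain ⟨v, hv⟩ := Nat.dvd_of_mod_eq_zero h
      exact hndvd ⟨v, by rw [hu, hv]; ring⟩
    · exact h
  obtain ⟨v, hv⟩ : ∃ v, u = 2 * v + 1 := ⟨u / 2, by omega⟩
  have hmZ : (m : ℤ) = 2 ^ (t + 1) * v + 2 ^ t := by
    rw [hu, hv]; push_cast; ring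
  rcases Int.natAbs_eq ((x : ℤ) - k) with heq | heq
  · rw [Int.ModEq]
    have : (x : ℤ) - k - 2 ^ t = 2 ^ (t + 1) * v := by rw [heq, hmZ]; ring
    exact (Int.modEq_iff_dvd.mpr ⟨-v, by linarith [this]⟩)
  · have : (x : ℤ) - k - 2 ^ t = 2 ^ (t + 1) * (-v - 1) := by rw [heq, hmZ]; ring
    exact (Int.modEq_iff_dvd.mpr ⟨-(-v - 1), by linarith [this]⟩)
end
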